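/- Toric equivalence is compatible with inverse: if π and μ are torically equivalent permutations of {1,...,n}, then π^{-1} and μ^{-1} are torically equivalent. -/

import Mathlib

/-- The circular word `0π₁⋯π_n` of a permutation `π ∈ S_n`, as a function on
`ZMod (n+1)`: position `0` holds the letter `0` and position `i` (for `1 ≤ i ≤ n`)
holds the letter `π(i)`. -/
def torHat {n : ℕ} (π : Equiv.Perm (Fin n)) (x : ZMod (n + 1)) : ZMod (n + 1) :=
  if h : x.val = 0 then 0
  else (((π ⟨x.val - 1, by have := ZMod.val_lt x; omega⟩ : Fin n) : ℕ) + 1 : ℕ)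

/-- `π` and `μ` are torically equivalent: the circular word of `μ` is obtained from that
of `π` by adding a constant `m` to all letters modulo `n+1` (and re-reading from the
position just after the letter `0`, i.e. rotating positions by some `c`). -/
def ToricEquiv {n : ℕ} (π μ : Equiv.Perm (Fin n)) : Prop :=
  ∃ m c : ZMod (n + 1), ∀ x : ZMod (n + 1), torHat μ x = torHat π (x + c) + m

lemma torHat_succ {n : ℕ} (π : Equiv.Perm (Fin n)) (i : Fin n) :
    torHat π ((((i : ℕ) + 1 : ℕ) : ZMod (n + 1))) = (((π i : ℕ) + 1 : ℕ) : ZMod (n + 1)) := by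
  have hval : ((((i : ℕ) + 1 : ℕ) : ZMod (n + 1))).val = (i : ℕ) + 1 :=
    ZMod.val_natCast_of_lt (by have := i.isLt; omega)
  unfold torHat
  rw [dif_neg (by rw [hval]; omega)]
  have key : (⟨((((i : ℕ) + 1 : ℕ) : ZMod (n + 1))).val - 1,
      by have := ZMod.val_lt ((((i : ℕ) + 1 : ℕ) : ZMod (n + 1))); omega⟩ : Fin n) = i := by
    apply Fin.ext
    simp only [hval]; omega
  rw [key]

lemma torHat_inv_torHat {n : ℕ} (π : Equiv.Perm (Fin n)) (x : ZMod (n + 1)) :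
    torHat π⁻¹ (torHat π x) = x := by
  by_cases hx : x.val = 0
  · have hx0 : x = 0 := by
      have : (x.val : ZMod (n + 1)) = x := by simp [ZMod.natCast_val]
      rw [← this, hx]; simp
    subst hx0
    unfold torHat
    rw [dif_pos hx, dif_pos (by simp)]
  · have hlt : x.val - 1 < n := by have := ZMod.val_lt x; omega
    set i : Fin n := ⟨x.val - 1, hlt⟩ with hi
    have hxcast : x = (((i : ℕ) + 1 : ℕ) : ZMod (n + 1)) := by
      have h1 : (i : ℕ) + 1 = x.val := by simp [hi]; omega
      rw [h1, ZMod.natCast_val, ZMod.cast_id]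
    rw [hxcast, torHat_succ, torHat_succ, Equiv.Perm.inv_def, Equiv.symm_apply_apply]

lemma torHat_injective {n : ℕ} (π : Equiv.Perm (Fin n)) :
    Function.Injective (torHat π) :=
  Function.LeftInverse.injective (torHat_inv_torHat π)

lemma torHat_torHat_inv {n : ℕ} (π : Equiv.Perm (Fin n)) (x : ZMod (n + 1)) :
    torHat π (torHat π⁻¹ x) = x := by
  have := torHat_inv_torHat π⁻¹ x
  rwa [inv_inv] at this

/-- Toric equivalence is compatible with inverse: if `π` and `μ` are torically
equivalent, then so are `π⁻¹` and `μ⁻¹`. -/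
theorem stmt_13 (n : ℕ) (π μ : Equiv.Perm (Fin n)) (h : ToricEquiv π μ) :
    ToricEquiv π⁻¹ μ⁻¹ := by
  obtain ⟨m, c, hmc⟩ := h
  refine ⟨-c, -m, fun x => ?_⟩
  apply torHat_injective μ
  rw [torHat_torHat_inv]
  rw [hmc, add_assoc, neg_add_cancel, add_zero, torHat_torHat_inv]
  ring
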